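/- The group of pairs (α, β) ∈ Sym({1,2,3}) × Sym({a,b,c}) satisfying the diagram-preservation condition ξ(i,j)(x) = y ⟺ ξ(α(i),α(j))(β(x)) = β(y) for the triple ξ(1,2) = ξ(2,3) = ρ, ξ(3,1) = ρ (case (ρ,ρ,ρ⁻¹)) is isomorphic to C₂ ⋉ (C₃ ⊕ C₃) and has order 18: it consists of all (ϱ^k, ρ^m) with ϱ the 3-cycle (1 2 3) and all (σ_i, σ_x) with i ∈ {1,2,3}, x ∈ {a,b,c}. -/
import Mathlib


abbrev Perm3 := Equiv.Perm (Fin 3)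

/-- The 3-cycle (`a ↦ b ↦ c ↦ a` on letters, or `1 ↦ 2 ↦ 3 ↦ 1` on indices;
both encoded as `0 ↦ 1 ↦ 2 ↦ 0` on `Fin 3`). -/
def ρ : Perm3 := finRotate 3

/-- `fixSwap k` is the transposition of `Fin 3` fixing `k`. -/
def fixSwap (k : Fin 3) : Perm3 :=
  match k.val with
  | 0 => Equiv.swap 1 2
  | 1 => Equiv.swap 0 2
  | _ => Equiv.swap 0 1

/-- The perspectivity matrix for the case `(ρ, ρ, ρ⁻¹)`:
`ξ(1,2) = ξ(2,3) = ρ`, `ξ(1,3) = ρ⁻¹` (indices encoded as `0,1,2`). -/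
def xi14 (i j : Fin 3) : Perm3 :=
  match i.val, j.val with
  | 0, 1 => ρ
  | 1, 0 => ρ⁻¹
  | 1, 2 => ρ
  | 2, 1 => ρ⁻¹
  | 0, 2 => ρ⁻¹
  | 2, 0 => ρ
  | _, _ => 1

/-- The pair `(α, β)` preserves the diagram of `ξ`. -/
def Pres (xi : Fin 3 → Fin 3 → Perm3) (α β : Perm3) : Prop :=
  ∀ i j x y : Fin 3, i ≠ j → (xi i j x = y ↔ xi (α i) (α j) (β x) = β y)

instance decPres (xi : Fin 3 → Fin 3 → Perm3) (α β : Perm3) : Decidable (Pres xi α β) := by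
  unfold Pres; infer_instance

lemma rho3 : ρ ^ 3 = 1 := by decide

lemma pow_iff (p : Perm3 × Perm3) :
    (∃ k m : ℕ, p = (ρ ^ k, ρ ^ m)) ↔ (∃ k m : Fin 3, p = (ρ ^ (k:ℕ), ρ ^ (m:ℕ))) := by
  constructor
  · rintro ⟨k, m, rfl⟩
    exact ⟨⟨k % 3, Nat.mod_lt _ (by norm_num)⟩, ⟨m % 3, Nat.mod_lt _ (by norm_num)⟩,
      by simp [← pow_eq_pow_mod _ rho3]⟩
  · rintro ⟨k, m, rfl⟩; exact ⟨k, m, rfl⟩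

lemma key : {p : Perm3 × Perm3 | Pres xi14 p.1 p.2} =
    {p : Perm3 × Perm3 | (∃ k m : Fin 3, p = (ρ ^ (k:ℕ), ρ ^ (m:ℕ))) ∨
      (∃ i x : Fin 3, p = (fixSwap i, fixSwap x))} := by
  ext p
  simp only [Set.mem_setOf_eq]
  revert p
  decide

/-- For the triple `(ρ, ρ, ρ⁻¹)` the group of diagram-preserving pairs has
order 18 (it is `C₂ ⋉ (C₃ ⊕ C₃)`): it consists of all `(ϱ^k, ρ^m)` and all
`(σ_i, σ_x)`. -/
theorem stmt_14 :
    {p : Perm3 × Perm3 | Pres xi14 p.1 p.2} =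
      {p : Perm3 × Perm3 | (∃ k m : ℕ, p = (ρ ^ k, ρ ^ m)) ∨
        (∃ i x : Fin 3, p = (fixSwap i, fixSwap x))} ∧
    Set.ncard {p : Perm3 × Perm3 | Pres xi14 p.1 p.2} = 18 := by
  constructor
  · rw [key]; ext p; simp only [Set.mem_setOf_eq, pow_iff]
  · rw [Set.ncard_eq_toFinset_card']
    decide
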